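/- arXiv:2003.11513 — 3 statements merged into one kernel-verified Lean document; each statement's English description precedes it below -/
import Mathlib

section
/- There exists a constant C > 0 depending only on b and θ such that for every real-valued function u ∈ C²([−b,b]) with u(−b) = u'(−b) = 0 and every λ ≥ 1 the Carleman estimate holds: ∫_{−b}^{b} (u''(z))² μ_λ(z) dz ≥ C ∫_{−b}^{b} (u''(z))² μ_λ(z) dz + C λ ∫_{−b}^{b} (u'(z))² μ_λ(z) dz + C λ³ ∫_{−b}^{b} u(z)² μ_λ(z) dz. -/
open Set

/-- The Carleman Weight Function `μ_λ(z) = exp(2λ(z−θ)²)`. -/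
noncomputable def cwf (lam θ z : ℝ) : ℝ := Real.exp (2 * lam * (z - θ) ^ 2)

lemma cwf_pos (lam θ z : ℝ) : 0 < cwf lam θ z := Real.exp_pos _

lemma cwf_continuous (lam θ : ℝ) : Continuous (cwf lam θ) := by
  unfold cwf; fun_prop

lemma cwf_hasDerivAt (lam θ z : ℝ) :
    HasDerivAt (cwf lam θ) (4 * lam * (z - θ) * cwf lam θ z) z := by
  have h1 : HasDerivAt (fun z : ℝ => 2 * lam * (z - θ) ^ 2)
      (2 * lam * (2 * (z - θ) ^ 1 * 1)) z := by
    exact (((hasDerivAt_id z).sub_const θ).pow 2).const_mul (2 * lam)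
  have h2 := h1.exp
  have : (4 : ℝ) * lam * (z - θ) * cwf lam θ z
      = Real.exp (2 * lam * (z - θ) ^ 2) * (2 * lam * (2 * (z - θ) ^ 1 * 1)) := by
    unfold cwf; ring
  rw [this]
  exact h2

/-- Weighted Poincaré inequality for the Carleman weight. -/
lemma key_poincare (b θ : ℝ) (hb : 0 < b) (hθ : b < θ) (lam : ℝ) (hlam : 1 ≤ lam)
    (v v' : ℝ → ℝ)
    (hv : ∀ x ∈ Icc (-b) b, HasDerivWithinAt v (v' x) (Icc (-b) b) x)
    (hv' : ContinuousOn v' (Icc (-b) b))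
    (h0 : v (-b) = 0) :
    lam ^ 2 * (∫ z in (-b)..b, (v z) ^ 2 * cwf lam θ z)
      ≤ (1 / (4 * (θ - b) ^ 2)) * ∫ z in (-b)..b, (v' z) ^ 2 * cwf lam θ z := by
  have hab : (-b) ≤ b := by linarith
  have hlam0 : (0:ℝ) < lam := by linarith
  have hd : (0:ℝ) < θ - b := by linarith
  have hvc : ContinuousOn v (Icc (-b) b) := fun x hx => (hv x hx).continuousWithinAt
  have hcwf := cwf_continuous lam θ
  -- integrands
  set f0 : ℝ → ℝ := fun z => (v z) ^ 2 * cwf lam θ z with hf0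
  set f1 : ℝ → ℝ := fun z => (v' z) ^ 2 * cwf lam θ z with hf1
  set p : ℝ → ℝ := fun z => 2 * v z * v' z * cwf lam θ z with hp
  set q : ℝ → ℝ := fun z => 4 * lam * (θ - z) * (v z) ^ 2 * cwf lam θ z with hq
  have huIcc : uIcc (-b) b = Icc (-b) b := uIcc_of_le hab
  have i0 : IntervalIntegrable f0 MeasureTheory.volume (-b) b := by
    apply ContinuousOn.intervalIntegrable
    rw [huIcc]
    exact (hvc.pow 2).mul hcwf.continuousOn
  have i1 : IntervalIntegrable f1 MeasureTheory.volume (-b) b := by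
    apply ContinuousOn.intervalIntegrable
    rw [huIcc]
    exact (hv'.pow 2).mul hcwf.continuousOn
  have ipint : IntervalIntegrable p MeasureTheory.volume (-b) b := by
    apply ContinuousOn.intervalIntegrable
    rw [huIcc]
    exact ((continuousOn_const.mul hvc).mul hv').mul hcwf.continuousOn
  have iqint : IntervalIntegrable q MeasureTheory.volume (-b) b := by
    apply ContinuousOn.intervalIntegrable
    rw [huIcc]
    exact ((continuousOn_const.mul (continuousOn_const.sub continuousOn_id)).mul
      (hvc.pow 2)).mul hcwf.continuousOn
  -- derivative of F = v^2 * μ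
  have hF : ∀ x ∈ Icc (-b) b,
      HasDerivWithinAt (fun z => (v z) ^ 2 * cwf lam θ z) (p x - q x) (Icc (-b) b) x := by
    intro x hx
    have h := ((hv x hx).pow 2).mul ((cwf_hasDerivAt lam θ x).hasDerivWithinAt)
    have : p x - q x = 2 * (v x) ^ (2 - 1) * v' x * cwf lam θ x
        + (v x) ^ 2 * (4 * lam * (x - θ) * cwf lam θ x) := by
      simp only [hp, hq]; ring
    rw [this]
    exact h
  -- FTC
  have hFTC : (∫ z in (-b)..b, (p z - q z))
      = (v b) ^ 2 * cwf lam θ b - (v (-b)) ^ 2 * cwf lam θ (-b) := by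
    apply intervalIntegral.integral_eq_sub_of_hasDeriv_right_of_le hab
    · exact (hvc.pow 2).mul hcwf.continuousOn
    · intro x hx
      have hx' : x ∈ Icc (-b) b := Ioo_subset_Icc_self hx
      exact ((hF x hx').hasDerivAt (Icc_mem_nhds hx.1 hx.2)).hasDerivWithinAt
    · exact ipint.sub iqint
  have hg0 : 0 ≤ ∫ z in (-b)..b, (p z - q z) := by
    rw [hFTC, h0]
    have := (cwf_pos lam θ b).le
    nlinarith [sq_nonneg (v b)]
  have hsplit : (∫ z in (-b)..b, (p z - q z))
      = (∫ z in (-b)..b, p z) - ∫ z in (-b)..b, q z :=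
    intervalIntegral.integral_sub ipint iqint
  have hqp : (∫ z in (-b)..b, q z) ≤ ∫ z in (-b)..b, p z := by
    rw [hsplit] at hg0; linarith
  -- lower bound for ∫ q
  have hlow : (∫ z in (-b)..b, (4 * lam * (θ - b)) * f0 z) ≤ ∫ z in (-b)..b, q z := by
    apply intervalIntegral.integral_mono_on hab (i0.const_mul _) iqint
    intro x hx
    have hX : 0 ≤ (v x) ^ 2 * cwf lam θ x :=
      mul_nonneg (sq_nonneg _) (cwf_pos lam θ x).le
    have hbz : 0 ≤ lam * (b - x) * ((v x) ^ 2 * cwf lam θ x) := by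
      apply mul_nonneg (mul_nonneg hlam0.le (by linarith [hx.2])) hX
    simp only [hf0, hq]
    nlinarith [hbz]
  -- upper bound for ∫ p
  have hup : (∫ z in (-b)..b, p z)
      ≤ ∫ z in (-b)..b, ((2 * lam * (θ - b)) * f0 z + (1 / (2 * lam * (θ - b))) * f1 z) := by
    apply intervalIntegral.integral_mono_on hab ipint ((i0.const_mul _).add (i1.const_mul _))
    intro x hx
    have hμ : 0 ≤ cwf lam θ x := (cwf_pos lam θ x).le
    have h2e : (0:ℝ) < 2 * lam * (θ - b) := by positivity
    have hsc : 2 * v x * v' x ≤ (2 * lam * (θ - b)) * (v x) ^ 2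
        + (1 / (2 * lam * (θ - b))) * (v' x) ^ 2 := by
      rw [← sub_nonneg]
      have h1 : 0 ≤ ((2 * lam * (θ - b)) * v x - v' x) ^ 2 / (2 * lam * (θ - b)) := by
        positivity
      have h2 : ((2 * lam * (θ - b)) * v x - v' x) ^ 2 / (2 * lam * (θ - b))
          = (2 * lam * (θ - b)) * (v x) ^ 2
            + (1 / (2 * lam * (θ - b))) * (v' x) ^ 2 - 2 * v x * v' x := by
        field_simp
        ring
      linarith [h2 ▸ h1]
    have := mul_le_mul_of_nonneg_right hsc hμ
    simp only [hp, hf0, hf1]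
    nlinarith [this]
  -- put it together
  have hIL : (∫ z in (-b)..b, (4 * lam * (θ - b)) * f0 z)
      = (4 * lam * (θ - b)) * ∫ z in (-b)..b, f0 z :=
    intervalIntegral.integral_const_mul _ _
  have hIR : (∫ z in (-b)..b, ((2 * lam * (θ - b)) * f0 z + (1 / (2 * lam * (θ - b))) * f1 z))
      = (2 * lam * (θ - b)) * (∫ z in (-b)..b, f0 z)
        + (1 / (2 * lam * (θ - b))) * ∫ z in (-b)..b, f1 z := by
    rw [intervalIntegral.integral_add (i0.const_mul _) (i1.const_mul _),
      intervalIntegral.integral_const_mul, intervalIntegral.integral_const_mul]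
  set I0 := ∫ z in (-b)..b, f0 z with hI0def
  set I1 := ∫ z in (-b)..b, f1 z with hI1def
  have hmain : (2 * lam * (θ - b)) * I0 ≤ (1 / (2 * lam * (θ - b))) * I1 := by
    rw [hIL] at hlow
    rw [hIR] at hup
    linarith
  have h2e : (0:ℝ) < 2 * lam * (θ - b) := by positivity
  have h4 : 4 * lam ^ 2 * (θ - b) ^ 2 * I0 ≤ I1 := by
    have := mul_le_mul_of_nonneg_left hmain h2e.le
    rw [show (2 * lam * (θ - b)) * ((1 / (2 * lam * (θ - b))) * I1) = I1 by field_simp] at this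
    nlinarith [this]
  have hpos : (0:ℝ) < 4 * (θ - b) ^ 2 := by positivity
  rw [show (1 / (4 * (θ - b) ^ 2)) * I1 = I1 / (4 * (θ - b) ^ 2) by ring,
    le_div_iff₀ hpos]
  nlinarith [h4]

/-- Lemma: one-dimensional Carleman estimate.
Fix `b > 0` and `θ > b`.  There exists a constant `C > 0` depending only on `b` and `θ`
such that for every real-valued `u ∈ C²([−b,b])` with `u(−b) = u'(−b) = 0` and every
`λ ≥ 1`:
`∫_{−b}^b (u'')² μ_λ ≥ C ∫_{−b}^b (u'')² μ_λ + C λ ∫_{−b}^b (u')² μ_λ + C λ³ ∫_{−b}^b u² μ_λ`. -/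
theorem stmt0 (b θ : ℝ) (hb : 0 < b) (hθ : b < θ) :
    ∃ C : ℝ, 0 < C ∧
      ∀ u : ℝ → ℝ, ContDiffOn ℝ 2 u (Icc (-b) b) →
        u (-b) = 0 → derivWithin u (Icc (-b) b) (-b) = 0 →
        ∀ lam : ℝ, 1 ≤ lam →
          (∫ z in (-b)..b,
              (derivWithin (derivWithin u (Icc (-b) b)) (Icc (-b) b) z) ^ 2 * cwf lam θ z) ≥
            C * (∫ z in (-b)..b,
                (derivWithin (derivWithin u (Icc (-b) b)) (Icc (-b) b) z) ^ 2 * cwf lam θ z)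
            + C * lam * (∫ z in (-b)..b,
                (derivWithin u (Icc (-b) b) z) ^ 2 * cwf lam θ z)
            + C * lam ^ 3 * (∫ z in (-b)..b, (u z) ^ 2 * cwf lam θ z) := by
  have hd : (0:ℝ) < θ - b := by linarith
  set K : ℝ := 1 / (4 * (θ - b) ^ 2) with hKdef
  have hK : 0 < K := by positivity
  refine ⟨1 / (1 + K + K ^ 2), by positivity, ?_⟩
  set C : ℝ := 1 / (1 + K + K ^ 2) with hCdef
  have hC : 0 < C := by positivity
  intro u hu hu0 hu10 lam hlam
  have hab : (-b) ≤ b := by linarith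
  have hlam0 : (0:ℝ) < lam := by linarith
  have hs : UniqueDiffOn ℝ (Icc (-b) b) := uniqueDiffOn_Icc (by linarith)
  set u1 : ℝ → ℝ := derivWithin u (Icc (-b) b) with hu1def
  set u2 : ℝ → ℝ := derivWithin u1 (Icc (-b) b) with hu2def
  have hu1 : ContDiffOn ℝ 1 u1 (Icc (-b) b) := hu.derivWithin hs (by norm_num)
  have hu_diff : ∀ x ∈ Icc (-b) b, HasDerivWithinAt u (u1 x) (Icc (-b) b) x := fun x hx =>
    ((hu.differentiableOn (by norm_num)) x hx).hasDerivWithinAt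
  have hu1_diff : ∀ x ∈ Icc (-b) b, HasDerivWithinAt u1 (u2 x) (Icc (-b) b) x := fun x hx =>
    ((hu1.differentiableOn (by norm_num)) x hx).hasDerivWithinAt
  have hu1c : ContinuousOn u1 (Icc (-b) b) := hu1.continuousOn
  have hu2c' : ContDiffOn ℝ 0 u2 (Icc (-b) b) := hu1.derivWithin hs (by norm_num)
  have hu2c : ContinuousOn u2 (Icc (-b) b) := hu2c'.continuousOn
  set I0 := ∫ z in (-b)..b, (u z) ^ 2 * cwf lam θ z with hI0def
  set I1 := ∫ z in (-b)..b, (u1 z) ^ 2 * cwf lam θ z with hI1def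
  set I2 := ∫ z in (-b)..b, (u2 z) ^ 2 * cwf lam θ z with hI2def
  have hI0n : 0 ≤ I0 := intervalIntegral.integral_nonneg hab
    (fun x _ => mul_nonneg (sq_nonneg _) (cwf_pos lam θ x).le)
  have hI1n : 0 ≤ I1 := intervalIntegral.integral_nonneg hab
    (fun x _ => mul_nonneg (sq_nonneg _) (cwf_pos lam θ x).le)
  have hI2n : 0 ≤ I2 := intervalIntegral.integral_nonneg hab
    (fun x _ => mul_nonneg (sq_nonneg _) (cwf_pos lam θ x).le)
  have P1 : lam ^ 2 * I0 ≤ K * I1 :=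
    key_poincare b θ hb hθ lam hlam u u1 hu_diff hu1c hu0
  have P2 : lam ^ 2 * I1 ≤ K * I2 :=
    key_poincare b θ hb hθ lam hlam u1 u2 hu1_diff hu2c hu10
  have hA : lam * I1 ≤ K * I2 := by
    nlinarith [P2, mul_nonneg (mul_nonneg hlam0.le (by linarith : (0:ℝ) ≤ lam - 1)) hI1n]
  have hB : lam ^ 3 * I0 ≤ K ^ 2 * I2 := by
    have h2 : lam * (lam ^ 2 * I0) ≤ lam * (K * I1) :=
      mul_le_mul_of_nonneg_left P1 hlam0.le
    have h4 : K * (lam * I1) ≤ K * (K * I2) := mul_le_mul_of_nonneg_left hA hK.le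
    nlinarith [h2, h4]
  have hCsum : C * (1 + K + K ^ 2) = 1 := by
    rw [hCdef]
    field_simp
  rw [ge_iff_le]
  have e1 : C * lam * I1 ≤ C * (K * I2) := by
    have := mul_le_mul_of_nonneg_left hA hC.le
    nlinarith [this]
  have e2 : C * lam ^ 3 * I0 ≤ C * (K ^ 2 * I2) := by
    have := mul_le_mul_of_nonneg_left hB hC.le
    nlinarith [this]
  have e3 : C * I2 + C * (K * I2) + C * (K ^ 2 * I2) = I2 := by
    have : C * I2 + C * (K * I2) + C * (K ^ 2 * I2) = (C * (1 + K + K ^ 2)) * I2 := by ring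
    rw [this, hCsum, one_mul]
  linarith
end

section
/- There exists λ₀ ≥ 1 depending only on b and θ such that for every λ ≥ λ₀ and every real-valued u ∈ C²([−b,b]) with u(−b) = u'(−b) = 0, setting v(z) = u(z) e^{λ(z−θ)²}, one has ∫_{−b}^{b} (u''(z))² e^{2λ(z−θ)²} dz ≥ 4λ ∫_{−b}^{b} (v'(z))² dz + 47 λ³ ∫_{−b}^{b} (z−θ)² u(z)² e^{2λ(z−θ)²} dz. -/
open Set

set_option maxHeartbeats 1000000

/-- Auxiliary Carleman-type lemma, stated for abstract `v, v1, v2`. -/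
lemma stmt2_aux (b θ c lam : ℝ) (hb : 0 < b) (hθ : b < θ) (hc : c = θ - b)
    (hlam1 : 1 ≤ lam) (hlamc : 16 ≤ lam * c ^ 2)
    (v v1 v2 : ℝ → ℝ)
    (hv1c : ContinuousOn v1 (Icc (-b) b)) (hv2c : ContinuousOn v2 (Icc (-b) b))
    (hvd : ∀ z ∈ Icc (-b) b, HasDerivWithinAt v (v1 z) (Icc (-b) b) z)
    (hv1d : ∀ z ∈ Icc (-b) b, HasDerivWithinAt v1 (v2 z) (Icc (-b) b) z)
    (hv0 : v (-b) = 0) (hv10 : v1 (-b) = 0) :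
    (∫ z in (-b)..b,
        (v2 z - 4*lam*(z-θ)*v1 z + (4*lam^2*(z-θ)^2 - 2*lam) * v z)^2) ≥
      4*lam * (∫ z in (-b)..b, (v1 z)^2)
      + 47*lam^3 * (∫ z in (-b)..b, (z-θ)^2 * (v z)^2) := by
  have hc0 : 0 < c := by rw [hc]; linarith
  have hlam0 : 0 < lam := by linarith
  have hbb : (-b : ℝ) < b := by linarith
  have hbb' : (-b : ℝ) ≤ b := hbb.le
  have huIcc : uIcc (-b) b = Icc (-b) b := uIcc_of_le hbb'
  have hvc : ContinuousOn v (Icc (-b) b) := fun z hz => (hvd z hz).continuousWithinAt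
  -- the boundary function and its derivative
  set G : ℝ → ℝ := fun z =>
    (-4*lam*(z-θ)) * (v1 z)^2 + (-16*lam^3*(z-θ)^3 + 8*lam^2*(z-θ)) * (v z)^2 with hG
  set g : ℝ → ℝ := fun z =>
    -4*lam*(v1 z)^2 - 8*lam*(z-θ)*(v1 z)*(v2 z)
    + (-48*lam^3*(z-θ)^2 + 8*lam^2)*(v z)^2
    + (-32*lam^3*(z-θ)^3 + 16*lam^2*(z-θ))*(v z)*(v1 z) with hg
  have hGc : ContinuousOn G (Icc (-b) b) := by rw [hG]; fun_prop
  have hgc : ContinuousOn g (Icc (-b) b) := by rw [hg]; fun_prop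
  have hgint : IntervalIntegrable g MeasureTheory.volume (-b) b := by
    apply ContinuousOn.intervalIntegrable; rwa [huIcc]
  -- derivative of G at interior points
  have hGd : ∀ z ∈ Ioo (-b) b, HasDerivAt G (g z) z := by
    intro z hz
    have hmem : Icc (-b) b ∈ nhds z := Icc_mem_nhds hz.1 hz.2
    have hvz : HasDerivAt v (v1 z) z :=
      (hvd z (Ioo_subset_Icc_self hz)).hasDerivAt hmem
    have hv1z : HasDerivAt v1 (v2 z) z :=
      (hv1d z (Ioo_subset_Icc_self hz)).hasDerivAt hmem
    have hwz : HasDerivAt (fun z : ℝ => z - θ) 1 z := (hasDerivAt_id z).sub_const θ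
    have h1 : HasDerivAt (fun z : ℝ => (-4*lam*(z-θ)) * (v1 z)^2)
        ((-4*lam*1) * (v1 z)^2 + (-4*lam*(z-θ)) * (2 * v1 z ^ 1 * v2 z)) z := by
      exact (hwz.const_mul (-4*lam)).mul (hv1z.pow 2)
    have h2 : HasDerivAt (fun z : ℝ => (-16*lam^3*(z-θ)^3 + 8*lam^2*(z-θ)) * (v z)^2)
        (((-16*lam^3) * (3 * (z-θ)^2 * 1) + 8*lam^2*1) * (v z)^2
          + (-16*lam^3*(z-θ)^3 + 8*lam^2*(z-θ)) * (2 * v z ^ 1 * v1 z)) z := by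
      exact (((hwz.pow 3).const_mul (-16*lam^3)).add (hwz.const_mul (8*lam^2))).mul
        (hvz.pow 2)
    have := h1.add h2
    rw [hG, hg]
    refine this.congr_deriv ?_
    ring
  -- FTC
  have hFTC : (∫ z in (-b)..b, g z) = G b - G (-b) :=
    intervalIntegral.integral_eq_sub_of_hasDeriv_right_of_le hbb' hGc
      (fun z hz => ((hGd z hz).hasDerivWithinAt)) hgint
  have hGa : G (-b) = 0 := by rw [hG]; simp [hv0, hv10]
  have hGb : 0 ≤ G b := by
    have hbθ : b - θ = -c := by rw [hc]; ring
    have e : G b = 4*lam*c*(v1 b)^2 + 8*lam^2*c*(2*lam*c^2-1)*(v b)^2 := by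
      simp only [hG]; rw [hbθ]; ring
    rw [e]
    have h2 : (0:ℝ) ≤ 2*lam*c^2 - 1 := by nlinarith
    have h3 := mul_nonneg (mul_nonneg (by positivity : (0:ℝ) ≤ 8*lam^2*c) h2)
      (sq_nonneg (v b))
    have h4 := mul_nonneg (by positivity : (0:ℝ) ≤ 4*lam*c) (sq_nonneg (v1 b))
    nlinarith [h3, h4]
  -- pointwise inequality on Icc
  have hpt : ∀ z ∈ Icc (-b) b,
      g z ≤ (v2 z - 4*lam*(z-θ)*v1 z + (4*lam^2*(z-θ)^2 - 2*lam) * v z)^2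
        - (4*lam*(v1 z)^2 + 47*lam^3*((z-θ)^2 * (v z)^2)) := by
    intro z hz
    have hzθ : c ≤ θ - z := by rw [hc]; linarith [hz.2]
    have hw2 : c^2 ≤ (z-θ)^2 := by nlinarith
    have hkey : (v2 z - 4*lam*(z-θ)*v1 z + (4*lam^2*(z-θ)^2 - 2*lam) * v z)^2
        - (4*lam*(v1 z)^2 + 47*lam^3*((z-θ)^2 * (v z)^2)) - g z
        = (v2 z + (4*lam^2*(z-θ)^2 - 2*lam) * v z)^2 + (4*lam*(z-θ)*v1 z)^2
          + lam^2*(lam*(z-θ)^2 - 8)*(v z)^2 := by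
      rw [hg]; ring
    have hpos : 0 ≤ lam^2*(lam*(z-θ)^2 - 8)*(v z)^2 := by
      have : (8:ℝ) ≤ lam * (z-θ)^2 := by nlinarith
      have h8 : 0 ≤ lam*(z-θ)^2 - 8 := by linarith
      positivity
    linarith [hkey, hpos, sq_nonneg (v2 z + (4*lam^2*(z-θ)^2 - 2*lam) * v z),
      sq_nonneg (4*lam*(z-θ)*v1 z)]
  -- integrability of the pieces
  have hFint : IntervalIntegrable
      (fun z => (v2 z - 4*lam*(z-θ)*v1 z + (4*lam^2*(z-θ)^2 - 2*lam) * v z)^2)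
      MeasureTheory.volume (-b) b := by
    apply ContinuousOn.intervalIntegrable; rw [huIcc]
    fun_prop
  have h1int : IntervalIntegrable (fun z => (v1 z)^2) MeasureTheory.volume (-b) b := by
    apply ContinuousOn.intervalIntegrable; rw [huIcc]; exact hv1c.pow 2
  have h2int : IntervalIntegrable (fun z => (z-θ)^2 * (v z)^2)
      MeasureTheory.volume (-b) b := by
    apply ContinuousOn.intervalIntegrable; rw [huIcc]
    fun_prop
  have hmono : (∫ z in (-b)..b, g z) ≤
      ∫ z in (-b)..b,
        ((v2 z - 4*lam*(z-θ)*v1 z + (4*lam^2*(z-θ)^2 - 2*lam) * v z)^2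
          - (4*lam*(v1 z)^2 + 47*lam^3*((z-θ)^2 * (v z)^2))) := by
    apply intervalIntegral.integral_mono_on hbb' hgint
    · exact hFint.sub (((h1int.const_mul (4*lam))).add ((h2int.const_mul (47*lam^3))))
    · exact hpt
  have hsplit : (∫ z in (-b)..b,
        ((v2 z - 4*lam*(z-θ)*v1 z + (4*lam^2*(z-θ)^2 - 2*lam) * v z)^2
          - (4*lam*(v1 z)^2 + 47*lam^3*((z-θ)^2 * (v z)^2))))
      = (∫ z in (-b)..b,
          (v2 z - 4*lam*(z-θ)*v1 z + (4*lam^2*(z-θ)^2 - 2*lam) * v z)^2)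
        - (4*lam * (∫ z in (-b)..b, (v1 z)^2)
          + 47*lam^3 * (∫ z in (-b)..b, (z-θ)^2 * (v z)^2)) := by
    rw [intervalIntegral.integral_sub hFint
      (((h1int.const_mul (4*lam))).add ((h2int.const_mul (47*lam^3)))),
      intervalIntegral.integral_add (h1int.const_mul (4*lam)) (h2int.const_mul (47*lam^3)),
      intervalIntegral.integral_const_mul, intervalIntegral.integral_const_mul]
  rw [hsplit] at hmono
  rw [hGa, sub_zero] at hFTC
  rw [hFTC] at hmono
  linarith

/-- Fix `b > 0` and `θ > b`.  There exists `λ₀ ≥ 1` depending only on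
`b` and `θ` such that for every `λ ≥ λ₀` and every real-valued `u ∈ C²([−b,b])` with
`u(−b) = u'(−b) = 0`, setting `v(z) = u(z) e^{λ(z−θ)²}`, one has
`∫_{−b}^b (u'')² e^{2λ(z−θ)²} dz ≥ 4λ ∫_{−b}^b (v')² dz
  + 47 λ³ ∫_{−b}^b (z−θ)² u² e^{2λ(z−θ)²} dz`. -/
theorem stmt2 (b θ : ℝ) (hb : 0 < b) (hθ : b < θ) :
    ∃ lam₀ : ℝ, 1 ≤ lam₀ ∧
      ∀ lam : ℝ, lam₀ ≤ lam →
        ∀ u : ℝ → ℝ, ContDiffOn ℝ 2 u (Icc (-b) b) →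
          u (-b) = 0 → derivWithin u (Icc (-b) b) (-b) = 0 →
          (∫ z in (-b)..b,
              (derivWithin (derivWithin u (Icc (-b) b)) (Icc (-b) b) z) ^ 2 *
                Real.exp (2 * lam * (z - θ) ^ 2)) ≥
            4 * lam * (∫ z in (-b)..b,
                (derivWithin (fun t => u t * Real.exp (lam * (t - θ) ^ 2))
                    (Icc (-b) b) z) ^ 2)
            + 47 * lam ^ 3 * (∫ z in (-b)..b,
                (z - θ) ^ 2 * (u z) ^ 2 * Real.exp (2 * lam * (z - θ) ^ 2)) := by
  have hc0 : 0 < θ - b := by linarith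
  refine ⟨max 1 (16 / (θ - b) ^ 2), le_max_left _ _, ?_⟩
  intro lam hlam u hu hub hub'
  have hlam1 : 1 ≤ lam := le_trans (le_max_left _ _) hlam
  have hlam0 : 0 < lam := by linarith
  have hlamc : 16 ≤ lam * (θ - b) ^ 2 := by
    have h := le_trans (le_max_right 1 (16 / (θ - b) ^ 2)) hlam
    rw [div_le_iff₀ (by positivity)] at h
    linarith
  have hbb : (-b : ℝ) < b := by linarith
  have hbb' : (-b : ℝ) ≤ b := hbb.le
  have huIcc : uIcc (-b) b = Icc (-b) b := uIcc_of_le hbb'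
  have hsu : UniqueDiffOn ℝ (Icc (-b) b) := uniqueDiffOn_Icc hbb
  set s : Set ℝ := Icc (-b) b with hs
  set u1 : ℝ → ℝ := derivWithin u s with hu1
  set u2 : ℝ → ℝ := derivWithin u1 s with hu2
  set E : ℝ → ℝ := fun z => Real.exp (lam * (z - θ) ^ 2) with hE
  set v : ℝ → ℝ := fun t => u t * E t with hv
  set v1 : ℝ → ℝ := fun z => (u1 z + 2 * lam * (z - θ) * u z) * E z with hv1
  set v2 : ℝ → ℝ := fun z =>
    (u2 z + 4 * lam * (z - θ) * u1 z + (2 * lam + 4 * lam ^ 2 * (z - θ) ^ 2) * u z) * E z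
    with hv2
  -- regularity
  have hcu : ContinuousOn u s := hu.continuousOn
  have hu1cd : ContDiffOn ℝ 1 u1 s := hu.derivWithin hsu (by norm_num)
  have hcu1 : ContinuousOn u1 s := hu1cd.continuousOn
  have hcu2 : ContinuousOn u2 s := (hu1cd.derivWithin (m := 0) hsu (by norm_num)).continuousOn
  have hEc : Continuous E := by rw [hE]; fun_prop
  have hv1c : ContinuousOn v1 s := by rw [hv1]; fun_prop
  have hv2c : ContinuousOn v2 s := by rw [hv2]; fun_prop
  -- derivative facts
  have hud : ∀ z ∈ s, HasDerivWithinAt u (u1 z) s z := fun z hz =>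
    ((hu.differentiableOn (by norm_num)) z hz).hasDerivWithinAt
  have hu1d : ∀ z ∈ s, HasDerivWithinAt u1 (u2 z) s z := fun z hz =>
    ((hu1cd.differentiableOn (by norm_num)) z hz).hasDerivWithinAt
  have hEd : ∀ z : ℝ, HasDerivAt E (2 * lam * (z - θ) * E z) z := by
    intro z
    have h := (((hasDerivAt_id z).sub_const θ).pow 2).const_mul lam
    have h2 := h.exp
    simp only [id_eq] at h2
    rw [hE]
    refine h2.congr_deriv ?_
    simp only [Pi.pow_apply, Nat.cast_ofNat]
    ring
  have hvd : ∀ z ∈ s, HasDerivWithinAt v (v1 z) s z := by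
    intro z hz
    have h := (hud z hz).mul ((hEd z).hasDerivWithinAt)
    rw [hv, hv1]
    refine h.congr_deriv ?_
    ring
  have hv1d : ∀ z ∈ s, HasDerivWithinAt v1 (v2 z) s z := by
    intro z hz
    have hw : HasDerivWithinAt (fun z : ℝ => z - θ) 1 s z :=
      ((hasDerivAt_id z).sub_const θ).hasDerivWithinAt
    have hin : HasDerivWithinAt (fun z => u1 z + 2 * lam * (z - θ) * u z)
        (u2 z + ((2 * lam * 1) * u z + (2 * lam * (z - θ)) * u1 z)) s z :=
      (hu1d z hz).add (((hw.const_mul (2 * lam)).mul (hud z hz)))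
    have h := hin.mul ((hEd z).hasDerivWithinAt)
    rw [hv1, hv2]
    refine h.congr_deriv ?_
    ring
  -- boundary values
  have hv0 : v (-b) = 0 := by rw [hv]; simp [hub]
  have hv10 : v1 (-b) = 0 := by
    rw [hv1]; simp only; rw [hub', hub]; ring
  -- exp identity
  have hexp : ∀ z : ℝ, (E z) ^ 2 = Real.exp (2 * lam * (z - θ) ^ 2) := by
    intro z
    rw [hE]; simp only [sq, ← Real.exp_add]; ring_nf
  -- rewrite the three integrals
  have e1 : (∫ z in (-b)..b, u2 z ^ 2 * Real.exp (2 * lam * (z - θ) ^ 2))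
      = ∫ z in (-b)..b,
          (v2 z - 4*lam*(z-θ)*v1 z + (4*lam^2*(z-θ)^2 - 2*lam) * v z)^2 := by
    apply intervalIntegral.integral_congr
    intro z hz
    simp only []
    have : v2 z - 4*lam*(z-θ)*v1 z + (4*lam^2*(z-θ)^2 - 2*lam) * v z = u2 z * E z := by
      rw [hv2, hv1, hv]; ring
    rw [this, mul_pow, hexp z]
  have e2 : (∫ z in (-b)..b, derivWithin v s z ^ 2)
      = ∫ z in (-b)..b, (v1 z)^2 := by
    apply intervalIntegral.integral_congr
    intro z hz
    rw [huIcc] at hz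
    simp only []
    rw [(hvd z hz).derivWithin (hsu z hz)]
  have e3 : (∫ z in (-b)..b, (z - θ) ^ 2 * u z ^ 2 * Real.exp (2 * lam * (z - θ) ^ 2))
      = ∫ z in (-b)..b, (z-θ)^2 * (v z)^2 := by
    apply intervalIntegral.integral_congr
    intro z hz
    simp only []
    rw [hv]; simp only [mul_pow]
    rw [hexp z]; ring
  rw [e1, e2, e3]
  exact stmt2_aux b θ (θ - b) lam hb hθ rfl hlam1 hlamc v v1 v2 hv1c hv2c hvd hv1d hv0 hv10
end

section
/- Let a₁ < a₂ and let {Ψ_n}_{n≥0} be the Gram–Schmidt orthonormalization in L²(a₁,a₂) of the functions φ_n(α) = αⁿ e^α, n ≥ 0. Then s_{mn} = ∫_{a₁}^{a₂} Ψ_n'(α) Ψ_m(α) dα satisfies s_{nn} = 1 for every n, and s_{mn} = 0 whenever n < m. Consequently, for every N ∈ ℕ* the matrix S_N = (s_{mn})_{m,n=0}^{N−1} is upper triangular with unit diagonal, hence invertible with det S_N = 1. -/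
open Set

noncomputable section

/-- `φ_n(α) = αⁿ e^α`. -/
def phiGS (n : ℕ) (α : ℝ) : ℝ := α ^ n * Real.exp α

/-- `Ψ` is the Gram–Schmidt orthonormalization in `L²(a₁,a₂)` of the system
`φ_n(α) = αⁿ e^α`: each `Ψ n` is a real linear combination of `φ_0, …, φ_n` with
positive leading coefficient, and the `Ψ n` are orthonormal in `L²(a₁,a₂)`. -/
def IsGS (a₁ a₂ : ℝ) (Ψ : ℕ → ℝ → ℝ) : Prop :=
  (∀ n, ∃ c : ℕ → ℝ, 0 < c n ∧
      ∀ α, Ψ n α = ∑ j ∈ Finset.range (n + 1), c j * phiGS j α) ∧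
  (∀ m n, (∫ α in a₁..a₂, Ψ m α * Ψ n α) = if m = n then 1 else 0)

/-- The matrix `S_N` with entries `s_{mn} = ∫_{a₁}^{a₂} Ψ_n'(α) Ψ_m(α) dα`. -/
def smat (a₁ a₂ : ℝ) (Ψ : ℕ → ℝ → ℝ) (N : ℕ) : Matrix (Fin N) (Fin N) ℝ :=
  Matrix.of fun m n : Fin N => ∫ α in a₁..a₂, deriv (Ψ (n : ℕ)) α * Ψ (m : ℕ) α

lemma phiGS_cont (j : ℕ) : Continuous (phiGS j) := by
  unfold phiGS
  exact (continuous_pow j).mul Real.continuous_exp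

/-- For the Gram–Schmidt orthonormalization `{Ψ_n}` of
`φ_n(α) = αⁿ e^α` in `L²(a₁,a₂)`, the numbers `s_{mn} = ∫ Ψ_n' Ψ_m` satisfy
`s_{nn} = 1` and `s_{mn} = 0` for `n < m`; consequently, for every `N ≥ 1` the matrix
`S_N = (s_{mn})` is invertible with `det S_N = 1`. -/
theorem stmt15 (a₁ a₂ : ℝ) (ha : a₁ < a₂) (Ψ : ℕ → ℝ → ℝ) (hΨ : IsGS a₁ a₂ Ψ) :
    (∀ n : ℕ, (∫ α in a₁..a₂, deriv (Ψ n) α * Ψ n α) = 1) ∧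
    (∀ m n : ℕ, n < m → (∫ α in a₁..a₂, deriv (Ψ n) α * Ψ m α) = 0) ∧
    (∀ N : ℕ, 0 < N →
      (smat a₁ a₂ Ψ N).det = 1 ∧
      ∃ B : Matrix (Fin N) (Fin N) ℝ, smat a₁ a₂ Ψ N * B = 1 ∧ B * smat a₁ a₂ Ψ N = 1) := by
  obtain ⟨h1, h2⟩ := hΨ
  choose c hc hrep using h1
  -- continuity of Ψ
  have hΨcont : ∀ m, Continuous (Ψ m) := by
    intro m
    have : Ψ m = fun α => ∑ j ∈ Finset.range (m + 1), c m j * phiGS j α :=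
      funext (hrep m)
    rw [this]
    exact continuous_finset_sum _ fun j _ => continuous_const.mul (phiGS_cont j)
  have hint : ∀ f g : ℝ → ℝ, Continuous f → Continuous g →
      IntervalIntegrable (fun α => f α * g α) MeasureTheory.volume a₁ a₂ :=
    fun f g hf hg => (hf.mul hg).intervalIntegrable _ _
  -- Key A : ∫ φ_k Ψ_m = 0 for k < m
  have keyA : ∀ k m : ℕ, k < m → (∫ α in a₁..a₂, phiGS k α * Ψ m α) = 0 := by
    intro k
    induction k using Nat.strong_induction_on with
    | _ k ih =>
      intro m hkm
      have hsum : ∀ α, c k k * (phiGS k α * Ψ m α) =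
          Ψ k α * Ψ m α - ∑ j ∈ Finset.range k, c k j * (phiGS j α * Ψ m α) := by
        intro α
        have h := hrep k α
        rw [Finset.sum_range_succ] at h
        have hs : ∑ j ∈ Finset.range k, c k j * (phiGS j α * Ψ m α)
            = (∑ j ∈ Finset.range k, c k j * phiGS j α) * Ψ m α := by
          rw [Finset.sum_mul]
          exact Finset.sum_congr rfl fun j _ => (mul_assoc _ _ _).symm
        rw [hs]
        linear_combination (-(Ψ m α)) * h
      have hI : (∫ α in a₁..a₂, c k k * (phiGS k α * Ψ m α))
          = c k k * ∫ α in a₁..a₂, phiGS k α * Ψ m α :=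
        intervalIntegral.integral_const_mul _ _
      have hI2 : (∫ α in a₁..a₂, c k k * (phiGS k α * Ψ m α)) = 0 := by
        have hcongr : (∫ α in a₁..a₂, c k k * (phiGS k α * Ψ m α))
            = ∫ α in a₁..a₂,
              (Ψ k α * Ψ m α - ∑ j ∈ Finset.range k, c k j * (phiGS j α * Ψ m α)) := by
          exact intervalIntegral.integral_congr fun α _ => hsum α
        rw [hcongr, intervalIntegral.integral_sub]
        · rw [h2 k m]
          have hsz : (∫ α in a₁..a₂, ∑ j ∈ Finset.range k, c k j * (phiGS j α * Ψ m α))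
              = ∑ j ∈ Finset.range k, c k j * ∫ α in a₁..a₂, phiGS j α * Ψ m α := by
            rw [intervalIntegral.integral_finset_sum]
            · exact Finset.sum_congr rfl fun j _ =>
                intervalIntegral.integral_const_mul _ _
            · intro j _
              exact (continuous_const.mul ((phiGS_cont j).mul (hΨcont m))).intervalIntegrable _ _
          rw [hsz]
          rw [if_neg (Nat.ne_of_lt hkm)]
          rw [Finset.sum_eq_zero]
          · ring
          · intro j hj
            rw [ih j (Finset.mem_range.mp hj) m (lt_trans (Finset.mem_range.mp hj) hkm)]
            ring
        · exact hint _ _ (hΨcont k) (hΨcont m)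
        · exact (continuous_finset_sum _ fun j _ =>
            continuous_const.mul ((phiGS_cont j).mul (hΨcont m))).intervalIntegrable _ _
      have hmul := hI.symm.trans hI2
      exact (mul_eq_zero.mp hmul).resolve_left (hc k).ne'
  -- derivative formula
  have keyD : ∀ n α, deriv (Ψ n) α =
      Ψ n α + ∑ i ∈ Finset.range n, (c n (i + 1) * (i + 1)) * phiGS i α := by
    intro n α
    have hder : ∀ j ∈ Finset.range (n + 1),
        HasDerivAt (fun x => c n j * phiGS j x)
          (c n j * ((↑j * α ^ (j - 1)) * Real.exp α + α ^ j * Real.exp α)) α := by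
      intro j _
      exact ((hasDerivAt_pow j α).mul (Real.hasDerivAt_exp α)).const_mul _
    have hsum := HasDerivAt.fun_sum hder
    have hΨn : HasDerivAt (Ψ n)
        (∑ j ∈ Finset.range (n + 1),
          c n j * ((↑j * α ^ (j - 1)) * Real.exp α + α ^ j * Real.exp α)) α := by
      have : Ψ n = fun x => ∑ j ∈ Finset.range (n + 1), c n j * phiGS j x :=
        funext (hrep n)
      rw [this]
      exact hsum
    rw [hΨn.deriv]
    have hsplit : ∑ j ∈ Finset.range (n + 1),
        c n j * ((↑j * α ^ (j - 1)) * Real.exp α + α ^ j * Real.exp α)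
        = (∑ j ∈ Finset.range (n + 1), c n j * (α ^ j * Real.exp α))
          + ∑ j ∈ Finset.range (n + 1), c n j * ((↑j * α ^ (j - 1)) * Real.exp α) := by
      rw [← Finset.sum_add_distrib]
      exact Finset.sum_congr rfl fun j _ => by ring
    rw [hsplit]
    congr 1
    · rw [hrep n α]
      exact Finset.sum_congr rfl fun j _ => rfl
    · rw [Finset.sum_range_succ']
      simp only [Nat.cast_zero, zero_mul, mul_zero, zero_add, add_zero, Nat.add_sub_cancel]
      exact Finset.sum_congr rfl fun i _ => by
        unfold phiGS; push_cast; ring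
  -- main computation
  have keyS : ∀ n m : ℕ, n ≤ m →
      (∫ α in a₁..a₂, deriv (Ψ n) α * Ψ m α) = if n = m then 1 else 0 := by
    intro n m hnm
    have hsum : ∀ α, deriv (Ψ n) α * Ψ m α =
        Ψ n α * Ψ m α +
          ∑ i ∈ Finset.range n, (c n (i + 1) * (i + 1)) * (phiGS i α * Ψ m α) := by
      intro α
      rw [keyD n α, add_mul, Finset.sum_mul]
      congr 1
      exact Finset.sum_congr rfl fun i _ => (mul_assoc _ _ _)
    have hcongr : (∫ α in a₁..a₂, deriv (Ψ n) α * Ψ m α)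
        = ∫ α in a₁..a₂, (Ψ n α * Ψ m α +
            ∑ i ∈ Finset.range n, (c n (i + 1) * (i + 1)) * (phiGS i α * Ψ m α)) :=
      intervalIntegral.integral_congr fun α _ => hsum α
    rw [hcongr, intervalIntegral.integral_add]
    · rw [h2 n m, intervalIntegral.integral_finset_sum]
      · rw [Finset.sum_eq_zero, add_zero]
        intro i hi
        rw [intervalIntegral.integral_const_mul,
          keyA i m (lt_of_lt_of_le (Finset.mem_range.mp hi) hnm)]
        ring
      · intro i _
        exact (continuous_const.mul ((phiGS_cont i).mul (hΨcont m))).intervalIntegrable _ _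
    · exact hint _ _ (hΨcont n) (hΨcont m)
    · exact (continuous_finset_sum _ fun i _ =>
        continuous_const.mul ((phiGS_cont i).mul (hΨcont m))).intervalIntegrable _ _
  refine ⟨fun n => by simpa using keyS n n le_rfl,
    fun m n hnm => by simpa [Nat.ne_of_lt hnm] using keyS n m hnm.le, ?_⟩
  intro N hN
  have htri : (smat a₁ a₂ Ψ N).BlockTriangular id := by
    intro i j hij
    have : (j : ℕ) < (i : ℕ) := hij
    show (∫ α in a₁..a₂, deriv (Ψ (j : ℕ)) α * Ψ (i : ℕ) α) = 0
    simpa [Nat.ne_of_lt this] using keyS (j : ℕ) (i : ℕ) this.le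
  have hdiag : ∀ i : Fin N, smat a₁ a₂ Ψ N i i = 1 := by
    intro i
    show (∫ α in a₁..a₂, deriv (Ψ (i : ℕ)) α * Ψ (i : ℕ) α) = 1
    simpa using keyS (i : ℕ) (i : ℕ) le_rfl
  have hdet : (smat a₁ a₂ Ψ N).det = 1 := by
    rw [Matrix.det_of_upperTriangular htri]
    exact Finset.prod_eq_one fun i _ => hdiag i
  refine ⟨hdet, (smat a₁ a₂ Ψ N)⁻¹, ?_, ?_⟩
  · exact Matrix.mul_nonsing_inv _ (by rw [hdet]; exact isUnit_one)
  · exact Matrix.nonsing_inv_mul _ (by rw [hdet]; exact isUnit_one)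

end
end
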